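/- For Lebesgue-almost every β ∈ (1,∞) there exists M ∈ ℕ such that (ε_{M+n})_{n≥1} > (α_n)_{n≥1} in the lexicographic order, where (α_n) is the greedy expansion of 1 in base β and ε_n = ⌈β⌉−1−α_n. -/

import Mathlib

set_option maxHeartbeats 1000000


open Filter Topology Set MeasureTheory

/-- The greedy map `G(x) = βx mod 1` on `[0,1)` and `G(x) = βx − ⌊β⌋` on
`[1, (⌈β⌉−1)/(β−1)]`. -/
noncomputable def greedyMap (β : ℝ) (x : ℝ) : ℝ :=
  if x < 1 then β * x - ⌊β * x⌋ else β * x - ⌊β⌋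

/-- The digits of the greedy expansion: `a_{n+1}(x) = ⌊β · Gⁿ(x)⌋` (0-indexed). -/
noncomputable def greedyDigit (β : ℝ) (x : ℝ) (n : ℕ) : ℤ :=
  ⌊β * (greedyMap β)^[n] x⌋

/-- Strict lexicographic order on sequences. -/
def LexLt (u v : ℕ → ℤ) : Prop :=
  ∃ M : ℕ, (∀ n < M, u n = v n) ∧ u M < v M

namespace Stmt9

noncomputable def orb (β : ℝ) (m : ℕ) : ℝ := (greedyMap β)^[m] 1

lemma orb_zero (β : ℝ) : orb β 0 = 1 := rfl

lemma orb_succ (β : ℝ) (m : ℕ) : orb β (m + 1) = greedyMap β (orb β m) :=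
  Function.iterate_succ_apply' _ _ _

lemma digit_eq (β : ℝ) (m : ℕ) : greedyDigit β 1 m = ⌊β * orb β m⌋ := rfl

lemma orb_mem (β : ℝ) : ∀ m : ℕ, 1 ≤ m → orb β m ∈ Ico (0:ℝ) 1 := by
  intro m hm
  induction m with
  | zero => omega
  | succ n ih =>
    rcases Nat.eq_zero_or_pos n with h0 | hpos
    · subst h0
      rw [orb_succ, orb_zero]
      have h : greedyMap β 1 = β * 1 - (⌊β⌋ : ℝ) := by
        rw [greedyMap, if_neg (lt_irrefl (1:ℝ))]
      rw [h, mul_one]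
      have h1 := Int.floor_le β
      have h2 := Int.lt_floor_add_one β
      constructor <;> [linarith; linarith]
    · have h := ih hpos
      rw [orb_succ, greedyMap, if_pos h.2]
      have h1 := Int.floor_le (β * orb β n)
      have h2 := Int.lt_floor_add_one (β * orb β n)
      constructor <;> [linarith; linarith]

lemma orb_rec (β : ℝ) (m : ℕ) : orb β (m + 1) = β * orb β m - (greedyDigit β 1 m : ℝ) := by
  rcases Nat.eq_zero_or_pos m with h0 | hpos
  · subst h0
    rw [orb_succ, orb_zero, digit_eq, orb_zero, greedyMap, if_neg (lt_irrefl (1:ℝ)), mul_one]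
  · have h := orb_mem β m hpos
    rw [orb_succ, digit_eq, greedyMap, if_pos h.2]

lemma orb_nonneg (β : ℝ) (m : ℕ) : 0 ≤ orb β m := by
  rcases Nat.eq_zero_or_pos m with h0 | hpos
  · subst h0; rw [orb_zero]; norm_num
  · exact (orb_mem β m hpos).1

lemma digit_nonneg (β : ℝ) (hβ : 0 < β) (m : ℕ) : 0 ≤ greedyDigit β 1 m := by
  rw [digit_eq]
  exact Int.floor_nonneg.2 (mul_nonneg hβ.le (orb_nonneg β m))

lemma digit_le (N : ℤ) (β : ℝ) (hβ0 : 0 < β) (h2 : β < (N:ℝ) + 1) (m : ℕ) :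
    greedyDigit β 1 m ≤ N := by
  rw [digit_eq]
  have hlt : β * orb β m < (N:ℝ) + 1 := by
    rcases Nat.eq_zero_or_pos m with h0 | hpos
    · subst h0; rw [orb_zero, mul_one]; exact h2
    · have h := orb_mem β m hpos
      nlinarith [h.1, h.2]
  have : ⌊β * orb β m⌋ < N + 1 := by
    apply Int.floor_lt.2
    push_cast
    exact hlt
  omega


noncomputable def gg (β₀ : ℝ) : ℕ → ℝ → ℝ
  | 0 => fun _ => 1
  | m + 1 => fun β => β * gg β₀ m β - (greedyDigit β₀ 1 m : ℝ)

noncomputable def ggd (β₀ : ℝ) : ℕ → ℝ → ℝ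
  | 0 => fun _ => 0
  | m + 1 => fun β => gg β₀ m β + β * ggd β₀ m β

lemma gg_zero (β₀ β : ℝ) : gg β₀ 0 β = 1 := rfl
lemma gg_succ (β₀ β : ℝ) (m : ℕ) :
    gg β₀ (m+1) β = β * gg β₀ m β - (greedyDigit β₀ 1 m : ℝ) := rfl
lemma ggd_succ (β₀ β : ℝ) (m : ℕ) :
    ggd β₀ (m+1) β = gg β₀ m β + β * ggd β₀ m β := rfl

lemma hasDerivAt_gg (β₀ : ℝ) (m : ℕ) (β : ℝ) : HasDerivAt (gg β₀ m) (ggd β₀ m β) β := by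
  induction m with
  | zero =>
    have : HasDerivAt (fun _ : ℝ => (1:ℝ)) 0 β := hasDerivAt_const β 1
    simpa [gg, ggd] using this
  | succ n ih =>
    have h1 : HasDerivAt (fun β : ℝ => β * gg β₀ n β) (1 * gg β₀ n β + β * ggd β₀ n β) β :=
      (hasDerivAt_id β).mul ih
    have h2 := h1.sub_const ((greedyDigit β₀ 1 n : ℝ))
    simpa [gg, ggd, one_mul] using h2

lemma gg_cont (β₀ : ℝ) (m : ℕ) : ContinuousOn (gg β₀ m) (Icc (0:ℝ) 0 ∪ univ) := by
  intro x _
  exact (hasDerivAt_gg β₀ m x).continuousAt.continuousWithinAt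

lemma gg_orb (β₀ : ℝ) (m : ℕ) : gg β₀ m β₀ = orb β₀ m := by
  induction m with
  | zero => rfl
  | succ n ih => rw [gg_succ, ih, ← orb_rec]

/-- the cylinder invariant -/
def Inv (β₀ l : ℝ) (m : ℕ) : Prop :=
  ∀ β ∈ Icc l β₀, ∀ j : ℕ, 1 ≤ j → j ≤ m → 0 ≤ gg β₀ j β ∧ gg β₀ j β < 1

/-- the deletion condition -/
def Del (β₀ l δ : ℝ) (m : ℕ) : Prop :=
  ∃ c' : ℤ, (0:ℝ) ≤ (c' : ℝ) ∧ l * gg β₀ m l ≤ (c' : ℝ) ∧ (c' : ℝ) + δ/2 ≤ β₀ * gg β₀ m β₀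

lemma gd_lb {β₀ l : ℝ} (hl0 : 0 < l) {m : ℕ} (hInv : Inv β₀ l m) :
    ∀ β ∈ Icc l β₀, ∀ j : ℕ, j ≤ m → l ^ j ≤ ggd β₀ (j+1) β := by
  intro β hβ j hj
  induction j with
  | zero => simp [ggd_succ, gg_zero, ggd]
  | succ n ih =>
    have h1 : l ^ n ≤ ggd β₀ (n+1) β := ih (by omega)
    have h2 : 0 ≤ gg β₀ (n+1) β := (hInv β hβ (n+1) (by omega) (by omega)).1
    have hβl : l ≤ β := hβ.1
    have h3 : l * l ^ n ≤ β * ggd β₀ (n+1) β := by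
      apply mul_le_mul hβl h1 (by positivity) (le_trans hl0.le hβl)
    rw [ggd_succ]
    calc l ^ (n+1) = l * l ^ n := by ring
    _ ≤ β * ggd β₀ (n+1) β := h3
    _ ≤ gg β₀ (n+1) β + β * ggd β₀ (n+1) β := by linarith

lemma gg_mono {β₀ l : ℝ} (hl0 : 0 < l) {m : ℕ} (hInv : Inv β₀ l m)
    (j : ℕ) (hj1 : 1 ≤ j) (hj : j ≤ m + 1) : StrictMonoOn (gg β₀ j) (Icc l β₀) := by
  apply strictMonoOn_of_deriv_pos (convex_Icc l β₀)
  · intro x _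
    exact (hasDerivAt_gg β₀ j x).continuousAt.continuousWithinAt
  · intro x hx
    rw [interior_Icc] at hx
    rw [(hasDerivAt_gg β₀ j x).deriv]
    obtain ⟨j', rfl⟩ : ∃ j', j = j' + 1 := ⟨j - 1, by omega⟩
    have := gd_lb hl0 hInv x (Ioo_subset_Icc_self hx) j' (by omega)
    calc (0:ℝ) < l ^ j' := by positivity
    _ ≤ _ := this

lemma gd_ub {β₀ l : ℝ} (hl1 : 1 < l) (hlβ : l ≤ β₀) {m : ℕ} (hInv : Inv β₀ l m) :
    ∀ β ∈ Icc l β₀, ∀ j : ℕ, 1 ≤ j → j ≤ m → ggd β₀ j β ≤ (β₀ ^ j - 1) / (l - 1) := by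
  have hl0 : (0:ℝ) < l := lt_trans one_pos hl1
  intro β hβ j hj1 hj
  induction j with
  | zero => omega
  | succ n ih =>
    rcases Nat.eq_zero_or_pos n with h0 | hpos
    · subst h0
      have h1 : ggd β₀ 1 β = 1 := by simp [ggd_succ, gg_zero, ggd]
      rw [h1, le_div_iff₀ (by linarith)]
      have : β₀ ^ (0 + 1) = β₀ := pow_one β₀
      rw [this]
      linarith
    · have h1 : ggd β₀ n β ≤ (β₀ ^ n - 1) / (l - 1) := ih hpos (by omega)
      have h2 : gg β₀ n β < 1 := (hInv β hβ n (by omega) (by omega)).2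
      have hβmem : β ≤ β₀ := hβ.2
      have hβpos : 0 < β := lt_of_lt_of_le hl0 hβ.1
      obtain ⟨n', rfl⟩ : ∃ n', n = n' + 1 := ⟨n - 1, by omega⟩
      have hnn : 0 ≤ ggd β₀ (n'+1) β := by
        have hlb := gd_lb hl0 hInv β hβ n' (by omega)
        have hp : (0:ℝ) ≤ l ^ n' := by positivity
        linarith
      have h3 : β * ggd β₀ (n'+1) β ≤ β₀ * ((β₀ ^ (n'+1) - 1) / (l - 1)) := by
        apply mul_le_mul hβmem h1 hnn (by linarith)
      rw [ggd_succ]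
      have hβ₀1 : 1 < β₀ := lt_of_lt_of_le hl1 hlβ
      have hpow : (1:ℝ) ≤ β₀ ^ (n'+1) := one_le_pow₀ hβ₀1.le
      have hl1' : (0:ℝ) < l - 1 := by linarith
      have key : 1 + β₀ * ((β₀ ^ (n'+1) - 1) / (l - 1)) ≤ (β₀ ^ (n'+1+1) - 1) / (l - 1) := by
        have heq : 1 + β₀ * ((β₀ ^ (n'+1) - 1) / (l - 1))
            = ((l - 1) + β₀ * (β₀ ^ (n'+1) - 1)) / (l - 1) := by
          field_simp
        rw [heq, div_le_div_iff_of_pos_right hl1']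
        have hp : β₀ ^ (n'+1+1) = β₀ ^ (n'+1) * β₀ := pow_succ _ _
        rw [hp]
        nlinarith
      calc gg β₀ (n'+1) β + β * ggd β₀ (n'+1) β ≤ 1 + β₀ * ((β₀ ^ (n'+1) - 1) / (l - 1)) := by
            linarith
      _ ≤ _ := key


section PerPoint

variable {N : ℤ} {β₀ l δ : ℝ}

-- bundled hypotheses as named assumptions in each lemma
lemma floor_beta (h1 : (N:ℝ) < β₀) (h2 : β₀ < (N:ℝ)+1) : greedyDigit β₀ 1 0 = N := by
  rw [digit_eq, orb_zero, mul_one]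
  exact Int.floor_eq_iff.2 ⟨h1.le, by exact_mod_cast h2⟩

lemma floor_beta' (h1 : (N:ℝ) < β) (h2 : β < (N:ℝ)+1) : (⌊β⌋ : ℤ) = N :=
  Int.floor_eq_iff.2 ⟨h1.le, by exact_mod_cast h2⟩

lemma cyl (h1 : (N:ℝ) < β₀) (h2 : β₀ < (N:ℝ)+1) (hl1 : 1 < l) (hlN : (N:ℝ) < l)
    {m : ℕ} (hInv : Inv β₀ l m) :
    ∀ β ∈ Icc l β₀, ∀ j : ℕ, j ≤ m → orb β j = gg β₀ j β := by
  intro β hβ j hj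
  have hβN : (N:ℝ) < β := lt_of_lt_of_le hlN hβ.1
  have hβN1 : β < (N:ℝ) + 1 := lt_of_le_of_lt hβ.2 h2
  induction j with
  | zero => rfl
  | succ n ih =>
    rcases Nat.eq_zero_or_pos n with h0 | hpos
    · subst h0
      rw [orb_succ, orb_zero, greedyMap, if_neg (lt_irrefl (1:ℝ)), gg_succ, gg_zero,
        floor_beta h1 h2, floor_beta' hβN hβN1]
    · have ihn := ih (by omega)
      have hg : 0 ≤ gg β₀ n β ∧ gg β₀ n β < 1 := hInv β hβ n (by omega) (by omega)
      rw [orb_succ, ihn, greedyMap, if_pos hg.2, gg_succ]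
      congr 1
      have hg1 : 0 ≤ gg β₀ (n+1) β ∧ gg β₀ (n+1) β < 1 := hInv β hβ (n+1) (by omega) hj
      rw [gg_succ] at hg1
      have : ⌊β * gg β₀ n β⌋ = greedyDigit β₀ 1 n := by
        apply Int.floor_eq_iff.2
        constructor
        · linarith [hg1.1]
        · push_cast
          linarith [hg1.2]
      rw [this]

lemma inv_one (h2 : β₀ < (N:ℝ)+1) (hlN : (N:ℝ) < l) (hl2 : l < β₀)
    (h1 : (N:ℝ) < β₀) : Inv β₀ l 1 := by
  intro β hβ j hj1 hj
  have hj' : j = 1 := by omega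
  subst hj'
  rw [gg_succ, gg_zero, floor_beta h1 h2, mul_one]
  constructor
  · have := hβ.1; linarith
  · have := hβ.2; linarith

lemma step_lemma (h1 : (N:ℝ) < β₀) (h2 : β₀ < (N:ℝ)+1) (hN : 1 ≤ N)
    (hδ0 : 0 < δ) (horb : ∀ m : ℕ, 1 ≤ m → δ ≤ orb β₀ m)
    (hlN : (N:ℝ) < l) (hl2 : l < β₀) (hl1 : 1 < l)
    {m : ℕ} (hm : 1 ≤ m) (hInv : Inv β₀ l m) (hnd : ¬ Del β₀ l δ m) :
    Inv β₀ l (m+1) ∧ β₀ * gg β₀ m β₀ - l * gg β₀ m l < 1 + δ/2 ∧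
      (greedyDigit β₀ 1 m : ℝ) < l * gg β₀ m l := by
  have hl0 : (0:ℝ) < l := lt_trans one_pos hl1
  have hβ₀0 : (0:ℝ) < β₀ := lt_trans hl0 hl2
  have hvm1 : δ ≤ orb β₀ (m+1) := horb _ (by omega)
  have hrec : orb β₀ (m+1) = β₀ * orb β₀ m - (greedyDigit β₀ 1 m : ℝ) := orb_rec β₀ m
  have hggβ₀ : gg β₀ m β₀ = orb β₀ m := gg_orb β₀ m
  have hmemL : l ∈ Icc l β₀ := ⟨le_refl l, hl2.le⟩
  have hmemR : β₀ ∈ Icc l β₀ := ⟨hl2.le, le_refl β₀⟩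
  have hgl0 : 0 ≤ gg β₀ m l := (hInv l hmemL m hm (le_refl m)).1
  have ha : (greedyDigit β₀ 1 m : ℝ) < l * gg β₀ m l := by
    by_contra hcon
    push_neg at hcon
    apply hnd
    refine ⟨greedyDigit β₀ 1 m, ?_, hcon, ?_⟩
    · exact_mod_cast digit_nonneg β₀ hβ₀0 m
    · rw [hggβ₀]; linarith
  refine ⟨?_, ?_, ha⟩
  · -- Inv (m+1)
    intro β hβ j hj1 hj
    rcases Nat.lt_or_ge j (m+1) with hlt | hge
    · exact hInv β hβ j hj1 (by omega)
    · have hj' : j = m + 1 := by omega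
      subst hj'
      have mono : StrictMonoOn (gg β₀ (m+1)) (Icc l β₀) := gg_mono hl0 hInv (m+1) (by omega) (le_refl _)
      constructor
      · have hle : gg β₀ (m+1) l ≤ gg β₀ (m+1) β := mono.monotoneOn hmemL hβ hβ.1
        have : 0 < gg β₀ (m+1) l := by rw [gg_succ]; linarith
        linarith
      · have hle : gg β₀ (m+1) β ≤ gg β₀ (m+1) β₀ := mono.monotoneOn hβ hmemR hβ.2
        have : gg β₀ (m+1) β₀ < 1 := by
          rw [gg_succ, hggβ₀, ← hrec]
          exact (orb_mem β₀ (m+1) (by omega)).2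
        linarith
  · -- cap
    by_contra hcon
    push_neg at hcon
    apply hnd
    have hx0 : 0 ≤ l * gg β₀ m l := mul_nonneg hl0.le hgl0
    refine ⟨⌈l * gg β₀ m l⌉, ?_, Int.le_ceil _, ?_⟩
    · exact_mod_cast Int.ceil_nonneg hx0
    · have hc := Int.ceil_lt_add_one (l * gg β₀ m l)
      linarith

lemma chain (h1 : (N:ℝ) < β₀) (h2 : β₀ < (N:ℝ)+1) (hN : 1 ≤ N)
    (hδ0 : 0 < δ) (horb : ∀ m : ℕ, 1 ≤ m → δ ≤ orb β₀ m)
    (hlN : (N:ℝ) < l) (hl2 : l < β₀) (hl1 : 1 < l) :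
    ∀ m : ℕ, 1 ≤ m → (∀ j, 1 ≤ j → j < m → ¬ Del β₀ l δ j) →
      Inv β₀ l m ∧ (β₀ - l) * l ^ (m-1) ≤ orb β₀ m - gg β₀ m l := by
  have hl0 : (0:ℝ) < l := lt_trans one_pos hl1
  have base1 : orb β₀ 1 - gg β₀ 1 l = β₀ - l := by
    rw [← gg_orb β₀ 1, gg_succ, gg_succ, gg_zero, gg_zero]
    ring
  intro m hm
  induction m with
  | zero => omega
  | succ n ih =>
    intro hnd
    rcases Nat.eq_zero_or_pos n with h0 | hpos
    · subst h0
      refine ⟨inv_one h2 hlN hl2 h1, ?_⟩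
      rw [base1]
      simp
    · have ihn := ih hpos (fun j hj1 hj2 => hnd j hj1 (by omega))
      have hndn : ¬ Del β₀ l δ n := hnd n hpos (by omega)
      obtain ⟨hInv', hcap, ha⟩ := step_lemma h1 h2 hN hδ0 horb hlN hl2 hl1 hpos ihn.1 hndn
      refine ⟨hInv', ?_⟩
      have hgrow : orb β₀ (n+1) - gg β₀ (n+1) l = β₀ * orb β₀ n - l * gg β₀ n l := by
        rw [orb_rec β₀ n, gg_succ]
        ring
      have horbn : 0 ≤ orb β₀ n := orb_nonneg β₀ n
      have hrw : β₀ * orb β₀ n - l * gg β₀ n l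
          = orb β₀ n * (β₀ - l) + l * (orb β₀ n - gg β₀ n l) := by ring
      have hstep : l * ((β₀ - l) * l ^ (n-1)) ≤ l * (orb β₀ n - gg β₀ n l) :=
        mul_le_mul_of_nonneg_left ihn.2 hl0.le
      have hexp : l * ((β₀ - l) * l ^ (n-1)) = (β₀ - l) * l ^ ((n+1)-1) := by
        obtain ⟨n', rfl⟩ : ∃ n', n = n' + 1 := ⟨n - 1, by omega⟩
        simp [pow_succ]
        ring
      rw [hgrow, hrw]
      have hnn : 0 ≤ orb β₀ n * (β₀ - l) := mul_nonneg horbn (by linarith)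
      calc (β₀ - l) * l ^ ((n+1)-1) = l * ((β₀ - l) * l ^ (n-1)) := hexp.symm
      _ ≤ l * (orb β₀ n - gg β₀ n l) := hstep
      _ ≤ orb β₀ n * (β₀ - l) + l * (orb β₀ n - gg β₀ n l) := by linarith

lemma exists_del (h1 : (N:ℝ) < β₀) (h2 : β₀ < (N:ℝ)+1) (hN : 1 ≤ N)
    (hδ0 : 0 < δ) (hδ1 : δ < 1) (horb : ∀ m : ℕ, 1 ≤ m → δ ≤ orb β₀ m)
    (hlN : (N:ℝ) < l) (hl2 : l < β₀) (hl1 : 1 < l) (hsmall : β₀ - l ≤ 1) :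
    ∃ m, 1 ≤ m ∧ Del β₀ l δ m ∧ Inv β₀ l m ∧ l ^ (m-1) * (β₀ - l) ≤ 2 := by
  have hl0 : (0:ℝ) < l := lt_trans one_pos hl1
  have base1 : orb β₀ 1 - gg β₀ 1 l = β₀ - l := by
    rw [← gg_orb β₀ 1, gg_succ, gg_succ, gg_zero, gg_zero]; ring
  have hex : ∃ j, 1 ≤ j ∧ Del β₀ l δ j := by
    by_contra H
    push_neg at H
    -- no deletion ever: growth beats cap
    have key : ∀ m : ℕ, 1 ≤ m → (β₀ - l) * l ^ m ≤ 2 := by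
      intro m hm
      have hch := chain h1 h2 hN hδ0 horb hlN hl2 hl1 m hm (fun j hj1 _ => H j hj1)
      have hndm : ¬ Del β₀ l δ m := H m hm
      obtain ⟨_, hcap, _⟩ := step_lemma h1 h2 hN hδ0 horb hlN hl2 hl1 hm hch.1 hndm
      have hch1 := chain h1 h2 hN hδ0 horb hlN hl2 hl1 (m+1) (by omega) (fun j hj1 _ => H j hj1)
      have hgrow : orb β₀ (m+1) - gg β₀ (m+1) l = β₀ * gg β₀ m β₀ - l * gg β₀ m l := by
        rw [orb_rec β₀ m, gg_succ, gg_orb]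
        ring
      have : (β₀ - l) * l ^ ((m+1)-1) ≤ orb β₀ (m+1) - gg β₀ (m+1) l := hch1.2
      rw [hgrow] at this
      have : (β₀ - l) * l ^ m ≤ β₀ * gg β₀ m β₀ - l * gg β₀ m l := by simpa using this
      linarith
    obtain ⟨n, hn⟩ := pow_unbounded_of_one_lt (2 / (β₀ - l)) hl1
    have hpos : (0:ℝ) < β₀ - l := by linarith
    have h2' : 2 < (β₀ - l) * l ^ (n+1) := by
      rw [div_lt_iff₀ hpos] at hn
      have : l ^ n ≤ l ^ (n+1) := pow_le_pow_right₀ hl1.le (by omega)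
      nlinarith
    have := key (n+1) (by omega)
    linarith
  classical
  have hexP : ∃ j, 1 ≤ j ∧ Del β₀ l δ j := hex
  obtain ⟨m, hPm, hmin⟩ : ∃ m, (1 ≤ m ∧ Del β₀ l δ m) ∧ ∀ j, j < m → ¬ (1 ≤ j ∧ Del β₀ l δ j) :=
    ⟨Nat.find hexP, Nat.find_spec hexP, fun j hj => Nat.find_min hexP hj⟩
  have hnd : ∀ j, 1 ≤ j → j < m → ¬ Del β₀ l δ j := by
    intro j hj1 hj2 hd
    exact hmin j hj2 ⟨hj1, hd⟩
  have hch := chain h1 h2 hN hδ0 horb hlN hl2 hl1 m hPm.1 hnd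
  have hcap : orb β₀ m - gg β₀ m l ≤ 2 := by
    rcases Nat.lt_or_ge m 2 with hm2 | hm2
    · have hm1 : m = 1 := by omega
      rw [hm1, base1]
      linarith
    · obtain ⟨m', rfl⟩ : ∃ m', m = m' + 1 := ⟨m - 1, by omega⟩
      have hndm' : ¬ Del β₀ l δ m' := hnd m' (by omega) (by omega)
      have hch' := chain h1 h2 hN hδ0 horb hlN hl2 hl1 m' (by omega) (fun j a b => hnd j a (by omega))
      obtain ⟨_, hcap', _⟩ := step_lemma h1 h2 hN hδ0 horb hlN hl2 hl1 (by omega) hch'.1 hndm'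
      have hgrow : orb β₀ (m'+1) - gg β₀ (m'+1) l = β₀ * gg β₀ m' β₀ - l * gg β₀ m' l := by
        rw [orb_rec β₀ m', gg_succ, gg_orb]; ring
      rw [hgrow]
      linarith
  refine ⟨m, hPm.1, hPm.2, hch.1, ?_⟩
  calc l ^ (m-1) * (β₀ - l) = (β₀ - l) * l ^ (m-1) := by ring
  _ ≤ orb β₀ m - gg β₀ m l := hch.2
  _ ≤ 2 := hcap

end PerPoint


/-- the chunk constant -/
noncomputable def c0 (N : ℤ) (β₀ δ : ℝ) : ℝ :=
  δ/2 * ((((N:ℝ) + β₀)/2) - 1) / β₀^2 * Real.exp (-(2/((((N:ℝ)+β₀)/2) - 1)))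

lemma c0_pos {N : ℤ} {β₀ δ : ℝ} (hN : 1 ≤ N) (h1 : (N:ℝ) < β₀) (hδ0 : 0 < δ) :
    0 < c0 N β₀ δ := by
  have hN1 : (1:ℝ) ≤ (N:ℝ) := by exact_mod_cast hN
  have hA : 1 < ((N:ℝ) + β₀)/2 := by linarith
  have hβ₀ : 0 < β₀ := by linarith
  unfold c0
  have he : 0 < Real.exp (-(2/((((N:ℝ)+β₀)/2) - 1))) := Real.exp_pos _
  have hA1 : (0:ℝ) < ((N:ℝ) + β₀)/2 - 1 := by linarith
  have h1' : 0 < δ/2 * ((((N:ℝ) + β₀)/2) - 1) / β₀^2 :=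
    div_pos (mul_pos (by linarith) hA1) (by positivity)
  exact mul_pos h1' he

lemma chunk {N : ℤ} {β₀ l δ A : ℝ} (h1 : (N:ℝ) < β₀) (h2 : β₀ < (N:ℝ)+1) (hN : 1 ≤ N)
    (hδ0 : 0 < δ) (hδ1 : δ < 1) (horb : ∀ m : ℕ, 1 ≤ m → δ ≤ orb β₀ m)
    (hlN : (N:ℝ) < l) (hl2 : l < β₀) (hl1 : 1 < l)
    (hA1 : 1 < A) (hAl : A ≤ l) (hA : A = ((N:ℝ) + β₀)/2)
    {m : ℕ} (hm : 1 ≤ m) (hDel : Del β₀ l δ m) (hInv : Inv β₀ l m) :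
    ∃ q₁ q₂ : ℝ, l ≤ q₁ ∧ q₁ < q₂ ∧ q₂ ≤ β₀ ∧ c0 N β₀ δ * (β₀ - l) ≤ q₂ - q₁ ∧
      ∀ β, q₁ ≤ β → β < q₂ → orb β (m+1) < δ/2 := by
  obtain ⟨m', rfl⟩ : ∃ m', m = m' + 1 := ⟨m - 1, by omega⟩
  have hl0 : (0:ℝ) < l := lt_trans one_pos hl1
  have hβ₀0 : (0:ℝ) < β₀ := lt_trans hl0 hl2
  have hβ₀1 : (1:ℝ) < β₀ := lt_trans hl1 hl2
  set ψ : ℝ → ℝ := fun β => β * gg β₀ (m'+1) β with hψ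
  set ψd : ℝ → ℝ := fun β => gg β₀ (m'+1) β + β * ggd β₀ (m'+1) β with hψd
  have hderiv : ∀ β : ℝ, HasDerivAt ψ (ψd β) β := by
    intro β
    have := (hasDerivAt_id' β).mul (hasDerivAt_gg β₀ (m'+1) β)
    simp only [one_mul] at this
    exact this
  have hcont : ContinuousOn ψ (Icc l β₀) :=
    fun x _ => (hderiv x).continuousAt.continuousWithinAt
  have hψpos : ∀ x ∈ Icc l β₀, 0 < ψd x := by
    intro x hx
    have hg0 : 0 ≤ gg β₀ (m'+1) x := (hInv x hx (m'+1) (by omega) (le_refl _)).1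
    have hgd : l ^ m' ≤ ggd β₀ (m'+1) x := gd_lb hl0 hInv x hx m' (by omega)
    have hx0 : 0 < x := lt_of_lt_of_le hl0 hx.1
    have hgt : 0 < x * ggd β₀ (m'+1) x := mul_pos hx0 (lt_of_lt_of_le (by positivity) hgd)
    show 0 < gg β₀ (m'+1) x + x * ggd β₀ (m'+1) x
    linarith
  have hmono : StrictMonoOn ψ (Icc l β₀) := by
    apply strictMonoOn_of_deriv_pos (convex_Icc l β₀) hcont
    intro x hx
    rw [interior_Icc] at hx
    rw [(hderiv x).deriv]
    exact hψpos x (Ioo_subset_Icc_self hx)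
  obtain ⟨c', hc'0, hcl, hcr⟩ := hDel
  have hψl : ψ l = l * gg β₀ (m'+1) l := rfl
  have hψβ₀ : ψ β₀ = β₀ * gg β₀ (m'+1) β₀ := rfl
  have hIVT := intermediate_value_Icc hl2.le hcont
  obtain ⟨q₁, hq₁mem, hq₁⟩ : ∃ q₁ ∈ Icc l β₀, ψ q₁ = (c' : ℝ) := by
    apply hIVT
    exact ⟨hcl, by linarith⟩
  obtain ⟨q₂, hq₂mem, hq₂⟩ : ∃ q₂ ∈ Icc l β₀, ψ q₂ = (c' : ℝ) + δ/2 := by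
    apply hIVT
    exact ⟨by linarith, hcr⟩
  have hq12 : q₁ < q₂ := by
    by_contra hcon
    push_neg at hcon
    have := hmono.monotoneOn hq₂mem hq₁mem hcon
    rw [hq₁, hq₂] at this
    linarith
  -- MVT for ψ on [q₁, q₂]
  obtain ⟨ξ, hξmem, hξ⟩ := exists_hasDerivAt_eq_slope ψ ψd hq12
    (hcont.mono (Icc_subset_Icc hq₁mem.1 hq₂mem.2)) (fun x _ => hderiv x)
  have hξIcc : ξ ∈ Icc l β₀ := Icc_subset_Icc hq₁mem.1 hq₂mem.2 (Ioo_subset_Icc_self hξmem)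
  have hslope : ψd ξ = (δ/2) / (q₂ - q₁) := by
    rw [hξ, hq₁, hq₂]; ring_nf
  -- bound ψd ξ from above
  have hgub : ggd β₀ (m'+1) ξ ≤ (β₀ ^ (m'+1) - 1)/(l-1) :=
    gd_ub hl1 hl2.le hInv ξ hξIcc (m'+1) (by omega) (le_refl _)
  have hgd_nonneg : 0 ≤ ggd β₀ (m'+1) ξ := by
    have := gd_lb hl0 hInv ξ hξIcc m' (by omega)
    have h0 : (0:ℝ) ≤ l ^ m' := by positivity
    linarith
  have hψub : ψd ξ ≤ β₀ ^ (m'+2) / (l-1) := by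
    have hg1 : gg β₀ (m'+1) ξ < 1 := (hInv ξ hξIcc (m'+1) (by omega) (le_refl _)).2
    have hξβ : ξ ≤ β₀ := hξIcc.2
    have hξpos : 0 < ξ := lt_of_lt_of_le hl0 hξIcc.1
    have hmul : ξ * ggd β₀ (m'+1) ξ ≤ β₀ * ((β₀ ^ (m'+1) - 1)/(l-1)) :=
      mul_le_mul hξβ hgub hgd_nonneg hβ₀0.le
    have hls : (0:ℝ) < l - 1 := by linarith
    have hpow1 : (1:ℝ) ≤ β₀ ^ (m'+1) := one_le_pow₀ hβ₀1.le
    have hkey : 1 + β₀ * ((β₀ ^ (m'+1) - 1)/(l-1)) ≤ β₀ ^ (m'+2) / (l-1) := by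
      have heq2 : 1 + β₀ * ((β₀ ^ (m'+1) - 1)/(l-1))
          = ((l-1) + β₀ * (β₀ ^ (m'+1) - 1)) / (l-1) := by field_simp
      rw [heq2, div_le_div_iff_of_pos_right hls]
      have hp : β₀ ^ (m'+2) = β₀ ^ (m'+1) * β₀ := pow_succ _ _
      rw [hp]
      have hexpand : β₀ * (β₀^(m'+1) - 1) = β₀^(m'+1) * β₀ - β₀ := by ring
      linarith
    show gg β₀ (m'+1) ξ + ξ * ggd β₀ (m'+1) ξ ≤ β₀ ^ (m'+2) / (l-1)
    linarith
  -- lower bound for q₂ - q₁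
  have hq21 : (δ/2) * (l-1) / β₀ ^ (m'+2) ≤ q₂ - q₁ := by
    have hls : (0:ℝ) < l - 1 := by linarith
    have hpow : (0:ℝ) < β₀ ^ (m'+2) := by positivity
    have hqq : (0:ℝ) < q₂ - q₁ := by linarith
    have h1' : (δ/2) / (q₂ - q₁) ≤ β₀ ^ (m'+2) / (l-1) := by rw [← hslope]; exact hψub
    rw [div_le_div_iff₀ hqq hls] at h1'
    rw [div_le_iff₀ hpow, mul_comm (q₂ - q₁)]
    exact h1'
  -- h * l^m' ≤ 1
  obtain ⟨ξ', hξ'mem, hξ'⟩ := exists_hasDerivAt_eq_slope (gg β₀ (m'+1)) (ggd β₀ (m'+1)) hl2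
    (fun x _ => (hasDerivAt_gg β₀ (m'+1) x).continuousAt.continuousWithinAt)
    (fun x _ => hasDerivAt_gg β₀ (m'+1) x)
  have hsmall : (β₀ - l) * l ^ m' ≤ 1 := by
    have hlb := gd_lb hl0 hInv ξ' (Ioo_subset_Icc_self hξ'mem) m' (by omega)
    have hgg1 : gg β₀ (m'+1) β₀ < 1 := by
      rw [gg_orb]; exact (orb_mem β₀ (m'+1) (by omega)).2
    have hgg0 : 0 ≤ gg β₀ (m'+1) l :=
      (hInv l ⟨le_refl l, hl2.le⟩ (m'+1) (by omega) (le_refl _)).1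
    have hbl : (0:ℝ) < β₀ - l := by linarith
    rw [hξ', le_div_iff₀ hbl] at hlb
    calc (β₀ - l) * l ^ m' = l ^ m' * (β₀ - l) := by ring
    _ ≤ gg β₀ (m'+1) β₀ - gg β₀ (m'+1) l := hlb
    _ ≤ 1 := by linarith
  -- Bernoulli + exp bound
  have hAm : 0 < A - 1 := by linarith
  have hBern : ((m' : ℝ)) * (β₀ - l) ≤ 2 / (A - 1) := by
    have hb : 1 + (m' : ℝ) * (l - 1) ≤ l ^ m' := by
      have := one_add_mul_le_pow (a := l - 1) (by linarith) m'
      simpa using this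
    have hbl : (0:ℝ) < β₀ - l := by linarith
    have hm0 : (0:ℝ) ≤ (m' : ℝ) := Nat.cast_nonneg m'
    have hAl1 : A - 1 ≤ l - 1 := by linarith
    have h1'' : (m' : ℝ) * (A - 1) ≤ l ^ m' := by
      have hmm := mul_le_mul_of_nonneg_left hAl1 hm0
      linarith
    have hbig : (m' : ℝ) * (A - 1) * (β₀ - l) ≤ 1 := by
      calc (m':ℝ)*(A-1)*(β₀-l) ≤ l^m' * (β₀-l) := mul_le_mul_of_nonneg_right h1'' hbl.le
      _ = (β₀ - l) * l^m' := by ring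
      _ ≤ 1 := hsmall
    rw [le_div_iff₀ hAm]
    calc (m':ℝ)*(β₀-l)*(A-1) = (m':ℝ)*(A-1)*(β₀-l) := by ring
    _ ≤ 1 := hbig
    _ ≤ 2 := one_le_two
  have hexp : (β₀ / l) ^ m' ≤ Real.exp (2 / (A - 1)) := by
    have hstep1 : β₀ / l ≤ Real.exp ((β₀ - l)/l) := by
      have hee := Real.add_one_le_exp ((β₀ - l)/l)
      have heq : β₀ / l = (β₀ - l)/l + 1 := by field_simp; ring
      rw [heq]
      linarith
    calc (β₀ / l) ^ m' ≤ (Real.exp ((β₀ - l)/l)) ^ m' := by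
          apply pow_le_pow_left₀ (by positivity) hstep1
    _ = Real.exp ((m' : ℝ) * ((β₀ - l)/l)) := by rw [← Real.exp_nat_mul]
    _ ≤ Real.exp (2 / (A - 1)) := by
        apply Real.exp_le_exp.2
        have hll : (β₀ - l)/l ≤ β₀ - l := by
          rw [div_le_iff₀ hl0]
          nlinarith
        calc (m' : ℝ) * ((β₀ - l)/l) ≤ (m' : ℝ) * (β₀ - l) := by
              apply mul_le_mul_of_nonneg_left hll (by positivity)
        _ ≤ 2 / (A - 1) := hBern
  -- main constant chain
  have hmain : c0 N β₀ δ * (β₀ - l) ≤ q₂ - q₁ := by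
    have hE : Real.exp (-(2/(A-1))) * Real.exp (2/(A-1)) = 1 := by
      rw [← Real.exp_add]; simp
    have hbl : (0:ℝ) < β₀ - l := by linarith
    have hls : (0:ℝ) < l - 1 := by linarith
    have hpow2 : (0:ℝ) < β₀ ^ (m'+2) := by positivity
    have hlpow : (0:ℝ) < l ^ m' := by positivity
    have hpm : (β₀ - l) * β₀ ^ m' ≤ Real.exp (2/(A-1)) := by
      have h1'' : (β₀/l)^m' * l^m' = β₀ ^ m' := by
        rw [div_pow, div_mul_cancel₀ _ hlpow.ne']
      calc (β₀ - l) * β₀ ^ m' = (β₀ - l) * ((β₀/l)^m' * l^m') := by rw [h1'']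
      _ = ((β₀ - l) * l^m') * (β₀/l)^m' := by ring
      _ ≤ 1 * Real.exp (2/(A-1)) := by
          apply mul_le_mul hsmall hexp (by positivity) (by norm_num)
      _ = Real.exp (2/(A-1)) := one_mul _
    have hc0A : c0 N β₀ δ = δ/2 * (A-1)/β₀^2 * Real.exp (-(2/(A-1))) := by
      unfold c0; rw [← hA]
    have hgoal : c0 N β₀ δ * (β₀ - l) * β₀ ^ (m'+2) ≤ δ/2 * (l-1) := by
      have hsplit : β₀ ^ (m'+2) = β₀^2 * β₀^m' := by ring
      rw [hsplit, hc0A]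
      have hrearr : δ/2*(A-1)/β₀^2 * Real.exp (-(2/(A-1))) * (β₀ - l) * (β₀^2 * β₀^m')
          = (δ/2*(A-1)) * (Real.exp (-(2/(A-1))) * ((β₀-l) * β₀^m')) := by
        field_simp
      rw [hrearr]
      have hAm' : (0:ℝ) < A - 1 := by linarith
      calc (δ/2*(A-1)) * (Real.exp (-(2/(A-1))) * ((β₀-l) * β₀^m'))
          ≤ (δ/2*(A-1)) * (Real.exp (-(2/(A-1))) * Real.exp (2/(A-1))) := by
            apply mul_le_mul_of_nonneg_left _ (by positivity)
            apply mul_le_mul_of_nonneg_left hpm (Real.exp_pos _).le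
      _ = δ/2*(A-1) := by rw [hE]; ring
      _ ≤ δ/2*(l-1) := by
          have : A - 1 ≤ l - 1 := by linarith
          have := mul_le_mul_of_nonneg_left this (by positivity : (0:ℝ) ≤ δ/2)
          linarith
    have hdiv : c0 N β₀ δ * (β₀ - l) ≤ δ/2 * (l-1) / β₀ ^ (m'+2) := by
      rw [le_div_iff₀ hpow2]
      exact hgoal
    calc c0 N β₀ δ * (β₀ - l) ≤ δ/2 * (l-1) / β₀ ^ (m'+2) := hdiv
    _ ≤ q₂ - q₁ := hq21
  refine ⟨q₁, q₂, hq₁mem.1, hq12, hq₂mem.2, hmain, ?_⟩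
  intro β hβ₁ hβ₂
  have hβIcc : β ∈ Icc l β₀ := ⟨le_trans hq₁mem.1 hβ₁, le_trans hβ₂.le hq₂mem.2⟩
  have horbm : orb β (m'+1) = gg β₀ (m'+1) β :=
    cyl h1 h2 hl1 hlN hInv β hβIcc (m'+1) (le_refl _)
  have hgmem : 0 ≤ gg β₀ (m'+1) β ∧ gg β₀ (m'+1) β < 1 :=
    hInv β hβIcc (m'+1) (by omega) (le_refl _)
  have hψβ1 : (c' : ℝ) ≤ ψ β := by
    rw [← hq₁]; exact hmono.monotoneOn hq₁mem hβIcc hβ₁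
  have hψβ2 : ψ β < (c' : ℝ) + δ/2 := by
    rw [← hq₂]; exact hmono hβIcc hq₂mem hβ₂
  have hid : ψ β = β * gg β₀ (m'+1) β := rfl
  rw [hid] at hψβ2 hψβ1
  have hfloor : ⌊β * gg β₀ (m'+1) β⌋ = c' := by
    apply Int.floor_eq_iff.2
    refine ⟨hψβ1, ?_⟩
    push_cast
    linarith
  rw [orb_succ, horbm, greedyMap, if_pos hgmem.2, hfloor]
  linarith


lemma ball_bound {N : ℤ} {β₀ δ : ℝ} (h1 : (N:ℝ) < β₀) (h2 : β₀ < (N:ℝ)+1) (hN : 1 ≤ N)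
    (hδ0 : 0 < δ) (hδ1 : δ < 1) (horb : ∀ m : ℕ, 1 ≤ m → δ ≤ orb β₀ m)
    (S : Set ℝ) (hS : ∀ β ∈ S, ∀ m : ℕ, 1 ≤ m → δ ≤ orb β m)
    (ε : ℝ) (hε0 : 0 < ε) (hε1 : ε ≤ 1) :
    ∃ h : ℝ, 0 < h ∧ h ≤ ε ∧
      volume (S ∩ Metric.closedBall β₀ h) ≤ ENNReal.ofReal ((2 - c0 N β₀ δ) * h) := by
  set A := ((N:ℝ) + β₀)/2 with hA
  have hN1 : (1:ℝ) ≤ (N:ℝ) := by exact_mod_cast hN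
  have hA1 : 1 < A := by rw [hA]; linarith
  have hAN : (N:ℝ) < A := by rw [hA]; linarith
  have hAβ : A < β₀ := by rw [hA]; linarith
  set l := max A (β₀ - ε) with hl
  have hAl : A ≤ l := le_max_left _ _
  have hl1 : 1 < l := lt_of_lt_of_le hA1 hAl
  have hlN : (N:ℝ) < l := lt_of_lt_of_le hAN hAl
  have hl2 : l < β₀ := max_lt hAβ (by linarith)
  have hh0 : 0 < β₀ - l := by linarith
  have hhε : β₀ - l ≤ ε := by
    have := le_max_right A (β₀ - ε)
    rw [hl]
    linarith
  have hsmall : β₀ - l ≤ 1 := le_trans hhε hε1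
  obtain ⟨m, hm1, hDel, hInv, _⟩ := exists_del h1 h2 hN hδ0 hδ1 horb hlN hl2 hl1 hsmall
  obtain ⟨q₁, q₂, hq₁l, hq12, hq₂β, hqc, hqdel⟩ :=
    chunk h1 h2 hN hδ0 hδ1 horb hlN hl2 hl1 hA1 hAl hA hm1 hDel hInv
  refine ⟨β₀ - l, hh0, hhε, ?_⟩
  have hQB : Ico q₁ q₂ ⊆ Metric.closedBall β₀ (β₀ - l) := by
    intro x hx
    rw [Metric.mem_closedBall, Real.dist_eq, abs_le]
    constructor
    · have hx1 := hx.1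
      linarith
    · have hx2 := hx.2
      linarith
  have hQS : ∀ x ∈ Ico q₁ q₂, x ∉ S := by
    intro x hx hxS
    have hdel := hqdel x hx.1 hx.2
    have hge := hS x hxS (m+1) (by omega)
    linarith
  have hsub : S ∩ Metric.closedBall β₀ (β₀ - l) ⊆ Metric.closedBall β₀ (β₀ - l) \ Ico q₁ q₂ :=
    fun x hx => ⟨hx.2, fun hQ => hQS x hQ hx.1⟩
  have hfin : volume (Ico q₁ q₂) ≠ ⊤ := by
    rw [Real.volume_Ico]; exact ENNReal.ofReal_ne_top
  have hc0nn : 0 ≤ c0 N β₀ δ * (β₀ - l) := by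
    have := c0_pos hN h1 hδ0
    positivity
  calc volume (S ∩ Metric.closedBall β₀ (β₀ - l))
      ≤ volume (Metric.closedBall β₀ (β₀ - l) \ Ico q₁ q₂) := measure_mono hsub
  _ = volume (Metric.closedBall β₀ (β₀ - l)) - volume (Ico q₁ q₂) :=
        measure_diff hQB measurableSet_Ico.nullMeasurableSet hfin
  _ = ENNReal.ofReal (2*(β₀ - l)) - ENNReal.ofReal (q₂ - q₁) := by
        rw [Real.volume_closedBall, Real.volume_Ico]
  _ ≤ ENNReal.ofReal (2*(β₀ - l)) - ENNReal.ofReal (c0 N β₀ δ * (β₀ - l)) :=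
        tsub_le_tsub_left (ENNReal.ofReal_le_ofReal hqc) _
  _ = ENNReal.ofReal (2*(β₀ - l) - c0 N β₀ δ * (β₀ - l)) :=
        (ENNReal.ofReal_sub _ hc0nn).symm
  _ = ENNReal.ofReal ((2 - c0 N β₀ δ) * (β₀ - l)) := by ring_nf

lemma key {N : ℤ} {β₀ δ : ℝ} (h1 : (N:ℝ) < β₀) (h2 : β₀ < (N:ℝ)+1) (hN : 1 ≤ N)
    (hδ0 : 0 < δ) (hδ1 : δ < 1) (horb : ∀ m : ℕ, 1 ≤ m → δ ≤ orb β₀ m)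
    (S : Set ℝ) (hS : ∀ β ∈ S, ∀ m : ℕ, 1 ≤ m → δ ≤ orb β m) :
    ¬ Tendsto (fun r => volume (S ∩ Metric.closedBall β₀ r) / volume (Metric.closedBall β₀ r))
      (𝓝[>] 0) (𝓝 1) := by
  intro hT
  have hc0 : 0 < c0 N β₀ δ := c0_pos hN h1 hδ0
  have hc0' : ENNReal.ofReal (1 - c0 N β₀ δ / 2) < 1 := ENNReal.ofReal_lt_one.2 (by linarith)
  have hev := hT.eventually (eventually_gt_nhds hc0')
  rw [eventually_iff] at hev
  obtain ⟨u, hu, hsub⟩ := mem_nhdsGT_iff_exists_Ioc_subset.1 hev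
  rw [mem_Ioi] at hu
  obtain ⟨h, hh0, hhu, hbound⟩ := ball_bound h1 h2 hN hδ0 hδ1 horb S hS (min u 1)
    (lt_min hu one_pos) (min_le_right _ _)
  have hmem : h ∈ Ioc 0 u := ⟨hh0, le_trans hhu (min_le_left _ _)⟩
  have hgt := hsub hmem
  rw [mem_setOf_eq] at hgt
  have hle : volume (S ∩ Metric.closedBall β₀ h) / volume (Metric.closedBall β₀ h)
      ≤ ENNReal.ofReal (1 - c0 N β₀ δ / 2) := by
    rw [Real.volume_closedBall]
    calc volume (S ∩ Metric.closedBall β₀ h) / ENNReal.ofReal (2*h)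
        ≤ ENNReal.ofReal ((2 - c0 N β₀ δ) * h) / ENNReal.ofReal (2*h) :=
          ENNReal.div_le_div_right hbound _
    _ = ENNReal.ofReal ((2 - c0 N β₀ δ) * h / (2*h)) :=
          (ENNReal.ofReal_div_of_pos (by linarith)).symm
    _ = ENNReal.ofReal (1 - c0 N β₀ δ / 2) := by
          congr 1
          field_simp
  exact absurd hgt (not_lt.2 hle)

lemma measurable_orb (m : ℕ) : Measurable (fun β : ℝ => orb β m) := by
  induction m with
  | zero =>
    have : (fun β : ℝ => orb β 0) = fun _ => (1:ℝ) := by funext β; rw [orb_zero]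
    rw [this]; exact measurable_const
  | succ n ih =>
    have h1 : Measurable (fun β : ℝ => β * orb β n) := measurable_id.mul ih
    have hcast : Measurable (fun z : ℤ => (z : ℝ)) := measurable_from_top
    have h2 : Measurable (fun β : ℝ => (⌊β * orb β n⌋ : ℝ)) := hcast.comp h1.floor
    have h3 : Measurable (fun β : ℝ => (⌊β⌋ : ℝ)) := hcast.comp measurable_id.floor
    have hset : MeasurableSet {β : ℝ | orb β n < 1} := measurableSet_lt ih measurable_const
    have heq : (fun β : ℝ => orb β (n+1)) = fun β =>
        if orb β n < 1 then β * orb β n - (⌊β * orb β n⌋:ℝ) else β * orb β n - (⌊β⌋:ℝ) := by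
      funext β; rw [orb_succ, greedyMap]
    rw [heq]
    exact Measurable.ite hset (h1.sub h2) (h1.sub h3)

lemma measure_S_zero (N : ℤ) (hN : 1 ≤ N) (δ : ℝ) (hδ0 : 0 < δ) (hδ1 : δ < 1) :
    volume {β : ℝ | β ∈ Ioo (N:ℝ) ((N:ℝ)+1) ∧ ∀ m : ℕ, 1 ≤ m → δ ≤ orb β m} = 0 := by
  set S := {β : ℝ | β ∈ Ioo (N:ℝ) ((N:ℝ)+1) ∧ ∀ m : ℕ, 1 ≤ m → δ ≤ orb β m} with hSdef
  have hSmeas : MeasurableSet S := by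
    have heq : S = Ioo (N:ℝ) ((N:ℝ)+1) ∩ ⋂ m : ℕ, ⋂ _h : 1 ≤ m, {β | δ ≤ orb β m} := by
      ext β
      simp only [hSdef, mem_setOf_eq, mem_inter_iff, mem_iInter]
    rw [heq]
    apply measurableSet_Ioo.inter
    apply MeasurableSet.iInter
    intro m
    apply MeasurableSet.iInter
    intro _
    exact measurableSet_le measurable_const (measurable_orb m)
  have hb := Besicovitch.ae_tendsto_measure_inter_div volume S
  have h0 : (volume.restrict S) S = 0 := by
    have hae : ∀ᵐ x ∂(volume.restrict S), x ∉ S := by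
      apply hb.mono
      intro x hx hxS
      exact key hxS.1.1 hxS.1.2 hN hδ0 hδ1 hxS.2 S (fun β hβ => hβ.2) hx
    rw [ae_iff] at hae
    simpa using hae
  rw [Measure.restrict_apply hSmeas, inter_self] at h0
  exact h0


lemma exists_small_digit (N : ℤ) (hN : 1 ≤ N) (β : ℝ) (h1 : (N:ℝ) < β) (h2 : β < (N:ℝ)+1) :
    ∃ j : ℕ, 1 ≤ j ∧ greedyDigit β 1 j < N := by
  have hN1 : (1:ℝ) ≤ (N:ℝ) := by exact_mod_cast hN
  have hβ0 : (0:ℝ) < β := by linarith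
  have hβ1 : (1:ℝ) < β := by linarith
  by_contra H
  push_neg at H
  have hdig : ∀ j : ℕ, 1 ≤ j → greedyDigit β 1 j = N := fun j hj =>
    le_antisymm (digit_le N β hβ0 h2 j) (H j hj)
  set p := (N:ℝ)/(β - 1) with hp
  have hb1 : β - 1 ≠ 0 := ne_of_gt (by linarith)
  have hps : (N:ℝ) = β * p - p := by
    rw [hp]
    field_simp
  have hrec : ∀ t : ℕ, p - orb β (1 + t) = β ^ t * (p - orb β 1) := by
    intro t
    induction t with
    | zero => simp
    | succ s ih =>
      have hstep : orb β (1 + s + 1) = β * orb β (1+s) - (N:ℝ) := by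
        have := orb_rec β (1+s)
        rw [hdig (1+s) (by omega)] at this
        exact this
      have heq : (1 : ℕ) + (s+1) = (1+s)+1 := by omega
      calc p - orb β (1+(s+1)) = p - (β * orb β (1+s) - (N:ℝ)) := by rw [heq, hstep]
      _ = β * (p - orb β (1+s)) := by rw [hps]; ring
      _ = β * (β^s * (p - orb β 1)) := by rw [ih]
      _ = β^(s+1) * (p - orb β 1) := by ring
  have hp1 : 1 < p := by
    rw [hp, lt_div_iff₀ (by linarith : (0:ℝ) < β - 1)]
    linarith
  have horb1 : orb β 1 < 1 := (orb_mem β 1 le_rfl).2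
  have hpos : 0 < p - orb β 1 := by linarith
  obtain ⟨t, ht⟩ := pow_unbounded_of_one_lt (p / (p - orb β 1)) hβ1
  rw [div_lt_iff₀ hpos] at ht
  have hlt : orb β (1+t) < 0 := by
    have h := hrec t
    linarith
  linarith [orb_nonneg β (1+t)]

lemma pointwise (N : ℤ) (hN : 1 ≤ N) (β : ℝ) (h1 : (N:ℝ) < β) (h2 : β < (N:ℝ)+1)
    (H : ∀ k : ℕ, 1 ≤ k → ∃ m, 1 ≤ m ∧ orb β m < (((N:ℝ)+1)⁻¹)^k) :
    ∃ M : ℕ, LexLt (greedyDigit β 1) (fun n => ⌈β⌉ - 1 - greedyDigit β 1 (M + n)) := by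
  classical
  have hN1 : (1:ℝ) ≤ (N:ℝ) := by exact_mod_cast hN
  have hβ0 : (0:ℝ) < β := by linarith
  have hex : ∃ j : ℕ, 1 ≤ j ∧ greedyDigit β 1 j < N := exists_small_digit N hN β h1 h2
  obtain ⟨js, ⟨hjs1, hjslt⟩, hjsmin⟩ :
      ∃ js, (1 ≤ js ∧ greedyDigit β 1 js < N) ∧
        ∀ i, i < js → ¬(1 ≤ i ∧ greedyDigit β 1 i < N) :=
    ⟨Nat.find hex, Nat.find_spec hex, fun i hi => Nat.find_min hex hi⟩
  obtain ⟨M, hM1, hMlt⟩ := H (js+1) (by omega)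
  have hNppos : (0:ℝ) < (N:ℝ)+1 := by linarith
  have hbound : ∀ i : ℕ, i ≤ js → β^(i+1) * orb β M < 1 := by
    intro i hi
    have hb1 : β^(i+1) ≤ ((N:ℝ)+1)^(i+1) := pow_le_pow_left₀ hβ0.le h2.le (i+1)
    have hinvpos : (0:ℝ) < (((N:ℝ)+1)⁻¹)^(js+1) := by positivity
    have step1 : β^(i+1) * orb β M < β^(i+1) * (((N:ℝ)+1)⁻¹)^(js+1) :=
      mul_lt_mul_of_pos_left hMlt (pow_pos hβ0 _)
    have step2 : β^(i+1) * (((N:ℝ)+1)⁻¹)^(js+1) ≤ ((N:ℝ)+1)^(i+1) * (((N:ℝ)+1)⁻¹)^(js+1) :=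
      mul_le_mul_of_nonneg_right hb1 hinvpos.le
    have step3 : ((N:ℝ)+1)^(i+1) * (((N:ℝ)+1)⁻¹)^(js+1) ≤ 1 := by
      rw [inv_pow, ← div_eq_mul_inv, div_le_one (by positivity)]
      exact pow_le_pow_right₀ (by linarith) (by omega)
    linarith
  have hzeros : ∀ i : ℕ, i ≤ js → orb β (M+i) = β^i * orb β M := by
    intro i
    induction i with
    | zero => intro _; simp
    | succ i' ih =>
      intro hi
      have hprev := ih (by omega)
      have hdig : greedyDigit β 1 (M+i') = 0 := by
        rw [digit_eq, hprev]
        apply Int.floor_eq_zero_iff.2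
        rw [show β*(β^i' * orb β M) = β^(i'+1) * orb β M by ring]
        exact ⟨mul_nonneg (pow_pos hβ0 _).le (orb_nonneg β M), hbound i' (by omega)⟩
      have heq : M + (i'+1) = (M+i')+1 := by omega
      rw [heq, orb_rec, hdig, hprev]
      push_cast
      ring
  have hdigzero : ∀ i : ℕ, i ≤ js → greedyDigit β 1 (M+i) = 0 := by
    intro i hi
    rw [digit_eq, hzeros i hi]
    apply Int.floor_eq_zero_iff.2
    rw [show β*(β^i * orb β M) = β^(i+1) * orb β M by ring]
    exact ⟨mul_nonneg (pow_pos hβ0 _).le (orb_nonneg β M), hbound i hi⟩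
  have hceil : (⌈β⌉ : ℤ) = N + 1 := by
    apply Int.ceil_eq_iff.2
    constructor
    · push_cast; linarith
    · push_cast; linarith
  refine ⟨M, js, ?_, ?_⟩
  · intro n hn
    show greedyDigit β 1 n = ⌈β⌉ - 1 - greedyDigit β 1 (M + n)
    have hdz : greedyDigit β 1 (M+n) = 0 := hdigzero n (by omega)
    have hdn : greedyDigit β 1 n = N := by
      rcases Nat.eq_zero_or_pos n with h0 | hpos
      · subst h0; exact floor_beta h1 h2
      · have hmin := hjsmin n hn
        have hle := digit_le N β hβ0 h2 n
        omega
    rw [hdz, hdn, hceil]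
    ring
  · show greedyDigit β 1 js < ⌈β⌉ - 1 - greedyDigit β 1 (M + js)
    have hdz : greedyDigit β 1 (M+js) = 0 := hdigzero js le_rfl
    rw [hdz, hceil]
    omega


/-- the exceptional family -/
def F (N k : ℕ) : Set ℝ :=
  {β : ℝ | β ∈ Ioo ((((N:ℤ)+1 : ℤ)):ℝ) (((((N:ℤ)+1 : ℤ)):ℝ)+1) ∧
    ∀ m : ℕ, 1 ≤ m → ((((((N:ℤ)+1 : ℤ)):ℝ)+1)⁻¹)^(k+1) ≤ orb β m}

lemma F_null (N k : ℕ) : volume (F N k) = 0 := by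
  have hpos : (0:ℝ) < ((((N:ℤ)+1 : ℤ)):ℝ) + 1 := by push_cast; linarith [Nat.cast_nonneg (α := ℝ) N]
  have h1' : (1:ℝ) < ((((N:ℤ)+1 : ℤ)):ℝ) + 1 := by push_cast; linarith [Nat.cast_nonneg (α := ℝ) N]
  apply measure_S_zero ((N:ℤ)+1) (by omega)
  · positivity
  · apply pow_lt_one₀ (by positivity)
    · rw [inv_lt_one_iff₀]
      right; exact h1'
    · omega

end Stmt9


open Stmt9

/-- for Lebesgue-almost every `β ∈ (1,∞)` there exists `M ∈ ℕ` with
`(ε_{M+n})_{n≥1} > (α_n)_{n≥1}` lexicographically, where `(α_n)` is the greedy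
expansion of `1` in base `β` and `ε_n = ⌈β⌉ − 1 − α_n`. -/
theorem stmt9 :
    ∀ᵐ β ∂(volume : Measure ℝ), β ∈ Ioi (1 : ℝ) →
      ∃ M : ℕ, LexLt (greedyDigit β 1)
        (fun n => ⌈β⌉ - 1 - greedyDigit β 1 (M + n)) := by
  classical
  set Bad : Set ℝ := (⋃ n : ℤ, {((n:ℝ))}) ∪ ⋃ (N : ℕ) (k : ℕ), F N k with hBad
  have hBadNull : volume Bad = 0 := by
    apply measure_union_null
    · apply measure_iUnion_null
      intro n
      exact measure_singleton _
    · apply measure_iUnion_null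
      intro N
      apply measure_iUnion_null
      intro k
      exact F_null N k
  rw [ae_iff]
  apply measure_mono_null ?_ hBadNull
  intro β hβ
  rw [mem_setOf_eq, _root_.not_imp] at hβ
  obtain ⟨hβ1, hβP⟩ := hβ
  rw [mem_Ioi] at hβ1
  by_cases hint : ∃ n : ℤ, β = (n:ℝ)
  · left
    obtain ⟨n, rfl⟩ := hint
    exact mem_iUnion.2 ⟨n, rfl⟩
  · right
    push_neg at hint
    set N' : ℤ := ⌊β⌋ with hN'
    have hN'1 : 1 ≤ N' := by
      rw [hN']
      exact Int.le_floor.2 (by exact_mod_cast hβ1.le)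
    have h1 : (N':ℝ) < β := by
      rcases lt_or_eq_of_le (Int.floor_le β) with h | h
      · exact h
      · exact absurd h.symm (hint N')
    have h2 : β < (N':ℝ)+1 := by
      have := Int.lt_floor_add_one β
      push_cast at this ⊢
      exact_mod_cast this
    set Nn : ℕ := (N' - 1).toNat with hNn
    have hcast : ((Nn:ℤ)+1 : ℤ) = N' := by
      rw [hNn, Int.toNat_of_nonneg (by omega)]
      omega
    have hcastR : ((((Nn:ℤ)+1 : ℤ)):ℝ) = (N' : ℝ) := by exact_mod_cast congrArg (fun z : ℤ => (z:ℝ)) hcast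
    by_cases hF : ∃ k : ℕ, β ∈ F Nn k
    · obtain ⟨k, hk⟩ := hF
      exact mem_iUnion.2 ⟨Nn, mem_iUnion.2 ⟨k, hk⟩⟩
    · exfalso
      push_neg at hF
      apply hβP
      apply pointwise N' hN'1 β h1 h2
      intro k hk
      have hnotF := hF (k-1)
      rw [F, mem_setOf_eq, not_and] at hnotF
      have hIoo : β ∈ Ioo ((((Nn:ℤ)+1 : ℤ)):ℝ) (((((Nn:ℤ)+1 : ℤ)):ℝ)+1) := by
        rw [hcastR]
        exact ⟨h1, h2⟩
      have hne := hnotF hIoo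
      push_neg at hne
      obtain ⟨m, hm1, hmlt⟩ := hne
      refine ⟨m, hm1, ?_⟩
      rw [hcastR] at hmlt
      have hkk : k - 1 + 1 = k := by omega
      rw [hkk] at hmlt
      exact hmlt
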